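/- The degree-10 real polynomial (X+c2)·(X+c3)·(X+c4)·(X+C2)·(X+C3)·(X+C4)·(X^2 + (A1+C1+C0−A0)·X − C1·(A0−C0))·(X^2 + (a1+c1+c0−a0)·X − c1·(a0−c0)) — the characteristic polynomial of the Jacobian of system (3) at the trivial steady state Ẽ0 = (0,0,0,0,0,0,0,0,0,0) — has a strictly positive real root; in particular Ẽ0 is linearly unstable. -/
import Mathlib


/-- The characteristic polynomial of the Jacobian of system (3) at the trivial
steady state `Ẽ0` has a strictly positive real root; in particular `Ẽ0` is
linearly unstable. -/
theorem stmt0 (a0 a1 a2 a3 a4 c0 c1 c2 c3 c4 A0 A1 A2 A3 A4 C0 C1 C2 C3 C4 b1 b2 B d D : ℝ)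
    (ha0 : 0 < a0) (ha1 : 0 < a1) (ha2 : 0 < a2) (ha3 : 0 < a3) (ha4 : 0 < a4)
    (hc0 : 0 < c0) (hc1 : 0 < c1) (hc2 : 0 < c2) (hc3 : 0 < c3) (hc4 : 0 < c4)
    (hA0 : 0 < A0) (hA1 : 0 < A1) (hA2 : 0 < A2) (hA3 : 0 < A3) (hA4 : 0 < A4)
    (hC0 : 0 < C0) (hC1 : 0 < C1) (hC2 : 0 < C2) (hC3 : 0 < C3) (hC4 : 0 < C4)
    (hb1 : 0 < b1) (hb2 : 0 < b2) (hB : 0 < B)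
    (hac : c0 < a0) (hAC : C0 < A0)
    (hd : d = (a0 - c0) / (b1 * c0)) (hD : D = (A0 - C0) / (B * C0)) :
    ∃ x : ℝ, 0 < x ∧
      (x + c2) * (x + c3) * (x + c4) * (x + C2) * (x + C3) * (x + C4) *
        (x ^ 2 + (A1 + C1 + C0 - A0) * x - C1 * (A0 - C0)) *
        (x ^ 2 + (a1 + c1 + c0 - a0) * x - c1 * (a0 - c0)) = 0 := by
  set p : ℝ := a1 + c1 + c0 - a0 with hp
  set q : ℝ := c1 * (a0 - c0) with hq
  have hq0 : 0 < q := mul_pos hc1 (by linarith)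
  have hdisc : 0 ≤ p ^ 2 + 4 * q := by positivity
  set s : ℝ := Real.sqrt (p ^ 2 + 4 * q) with hs
  have hs2 : s ^ 2 = p ^ 2 + 4 * q := Real.sq_sqrt hdisc
  have hsnn : 0 ≤ s := Real.sqrt_nonneg _
  have hsp : p < s := by nlinarith
  refine ⟨(-p + s) / 2, by linarith, ?_⟩
  have h0 : ((-p + s) / 2) ^ 2 + p * ((-p + s) / 2) - q = 0 := by
    linear_combination hs2 / 4
  rw [hp, hq] at h0
  rw [h0, mul_zero]
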